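/- Let K be a field and b, c ∈ K such that the Kubert-Tate curve E(b,c) has nonzero discriminant and c ≠ 0. Then in the group of K-rational points of E(b,c), one has 4·(0,0) = ( b(b−c)/c² , b²(c² + c − b)/c³ ). -/

import Mathlib

open WeierstrassCurve.Affine

/-- The Kubert-Tate normal form curve E(b,c) : y^2 + (1-c)xy - by = x^3 - bx^2. -/
def Ebc {K : Type*} [CommRing K] (b c : K) : WeierstrassCurve.Affine K :=
  { a₁ := 1 - c, a₂ := -b, a₃ := -b, a₄ := 0, a₆ := 0 }
/-- The point (0, 0) on E(b,c), nonsingular since the discriminant is nonzero. -/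
noncomputable def P₀ {K : Type*} [Field K] (b c : K) (hΔ : (Ebc b c).Δ ≠ 0) :
    (Ebc b c).Point :=
  .some _ _ ((WeierstrassCurve.Affine.equation_iff_nonsingular_of_Δ_ne_zero hΔ).mp
    ((Ebc b c).equation_zero.mpr rfl))

lemma some_eq_some {K : Type*} [Field K] {W : WeierstrassCurve.Affine K}
    {x y x' y' : K} (h : W.Nonsingular x y) (hx : x = x') (hy : y = y') :
    ∃ h' : W.Nonsingular x' y', Point.some _ _ h = Point.some _ _ h' := by
  subst hx; subst hy; exact ⟨h, rfl⟩

open Classical in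
theorem stmt_3 {K : Type*} [Field K] (b c : K) (hΔ : (Ebc b c).Δ ≠ 0) (hc : c ≠ 0) :
    ∃ h : (Ebc b c).Nonsingular (b * (b - c) / c ^ 2) (b ^ 2 * (c ^ 2 + c - b) / c ^ 3),
      4 • P₀ b c hΔ = WeierstrassCurve.Affine.Point.some _ _ h := by
  have hb : b ≠ 0 := by
    intro hb0
    apply hΔ
    subst hb0
    simp [Ebc, WeierstrassCurve.Δ, WeierstrassCurve.b₂, WeierstrassCurve.b₄,
      WeierstrassCurve.b₆, WeierstrassCurve.b₈]
  set W := Ebc b c with hW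
  have hy0 : (0 : K) ≠ W.negY 0 0 := by
    simp [hW, Ebc, negY]; exact fun h => hb h.symm
  have h0 := (equation_iff_nonsingular_of_Δ_ne_zero hΔ).mp ((Ebc b c).equation_zero.mpr rfl)
  have hneg0 : W.negY 0 0 = b := by simp [hW, Ebc, negY]
  have hneg2 : W.negY b (b * c) = 0 := by simp [hW, Ebc, negY]; ring
  -- double of (0,0)
  have eqX1 : W.addX 0 0 (W.slope 0 0 0 0) = b := by
    rw [slope_of_Y_ne rfl hy0, hneg0, addX]
    simp [hW, Ebc]
  have eqY1 : W.addY 0 0 0 (W.slope 0 0 0 0) = b * c := by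
    rw [slope_of_Y_ne rfl hy0, hneg0, addY, negAddY, negY, addX]
    simp only [hW, Ebc]
    field_simp [mul_ne_zero hb hc]
    ring
  obtain ⟨h2, hsome2⟩ := some_eq_some
    (nonsingular_add h0 h0 (fun h => hy0 h.2)) eqX1 eqY1
  have hstep1 : P₀ b c hΔ + P₀ b c hΔ = Point.some _ _ h2 := by
    rw [P₀, Point.add_of_Y_ne hy0]; exact hsome2
  -- double of (b, bc)
  have hy2 : b * c ≠ W.negY b (b * c) := by
    rw [hneg2]
    exact mul_ne_zero hb hc
  have eqX2 : W.addX b b (W.slope b b (b * c) (b * c)) = b * (b - c) / c ^ 2 := by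
    rw [slope_of_Y_ne rfl hy2, hneg2, sub_zero, addX]
    simp only [hW, Ebc]
    field_simp [mul_ne_zero hb hc]
    ring
  have eqY2 : W.addY b b (b * c) (W.slope b b (b * c) (b * c))
      = b ^ 2 * (c ^ 2 + c - b) / c ^ 3 := by
    rw [slope_of_Y_ne rfl hy2, hneg2, sub_zero, addY, negAddY, negY, addX]
    simp only [hW, Ebc]
    field_simp [mul_ne_zero hb hc]
    ring
  obtain ⟨h4, hsome4⟩ := some_eq_some
    (nonsingular_add h2 h2 (fun h => hy2 h.2)) eqX2 eqY2
  have hstep2 : Point.some _ _ h2 + Point.some _ _ h2 = Point.some _ _ h4 := by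
    rw [Point.add_of_Y_ne hy2]; exact hsome4
  refine ⟨h4, ?_⟩
  calc 4 • P₀ b c hΔ = (P₀ b c hΔ + P₀ b c hΔ) + (P₀ b c hΔ + P₀ b c hΔ) := by
        rw [show (4 : ℕ) = 2 + 2 by rfl, add_nsmul, two_nsmul]
    _ = Point.some _ _ h4 := by rw [hstep1, hstep2]
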